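/- For Z ~ N(0,1), σ > 0 and μ ∈ ℝ, α ∈ ℝ: E[Z·st(σZ + μ, α)] = σ·(Φ̄((α−μ)/σ) + Φ̄((α+μ)/σ)), where st(x, α) = relu(x − α) − relu(−x − α) is the soft-thresholding operator. -/

import Mathlib

open MeasureTheory ProbabilityTheory

noncomputable def gaussPDF (t : ℝ) : ℝ := Real.exp (-t ^ 2 / 2) / Real.sqrt (2 * Real.pi)

noncomputable def PhiBar (x : ℝ) : ℝ := ∫ t in Set.Ici x, gaussPDF t

noncomputable def relu (t : ℝ) : ℝ := max t 0

noncomputable def st (x c : ℝ) : ℝ := relu (x - c) - relu (-x - c)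

section Helpers

open Real Filter Set Topology

lemma gaussPDF_eq : gaussPDF = fun t => Real.exp (-(1/2) * t ^ 2) * (Real.sqrt (2 * Real.pi))⁻¹ := by
  funext t
  rw [gaussPDF, div_eq_mul_inv, show -t ^ 2 / 2 = -(1/2) * t ^ 2 by ring]

lemma continuous_gaussPDF : Continuous gaussPDF := by
  rw [gaussPDF_eq]; fun_prop

lemma gaussPDF_neg (x : ℝ) : gaussPDF (-x) = gaussPDF x := by simp [gaussPDF]

lemma gaussPDF_nonneg (x : ℝ) : 0 ≤ gaussPDF x := by
  rw [gaussPDF]; positivity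

lemma integrable_gaussPDF : Integrable gaussPDF := by
  rw [gaussPDF_eq]
  exact (integrable_exp_neg_mul_sq (by norm_num : (0:ℝ) < 1/2)).mul_const _

lemma integrable_mul_gaussPDF : Integrable (fun z => z * gaussPDF z) := by
  have h := (integrable_mul_exp_neg_mul_sq (by norm_num : (0:ℝ) < 1/2)).mul_const
    (Real.sqrt (2 * Real.pi))⁻¹
  refine h.congr (Filter.Eventually.of_forall fun z => ?_)
  rw [gaussPDF_eq]; ring

lemma integrable_sq_mul_gaussPDF : Integrable (fun z => z ^ 2 * gaussPDF z) := by
  have h : Integrable (fun z : ℝ => z ^ 2 * Real.exp (-(1/2) * z ^ 2)) := by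
    refine Integrable.mono' ((integrable_exp_neg_mul_sq
      (by norm_num : (0:ℝ) < 1/4)).const_mul 4) ?_ ?_
    · exact (Continuous.mul (by fun_prop) (by fun_prop)).aestronglyMeasurable
    · refine Filter.Eventually.of_forall fun x => ?_
      have h1 : x ^ 2 / 4 ≤ Real.exp (x ^ 2 / 4) := (Real.add_one_le_exp _).trans' (by linarith)
      have h2 : (0:ℝ) < Real.exp (-(1/2) * x ^ 2) := Real.exp_pos _
      rw [Real.norm_eq_abs, abs_mul, abs_of_nonneg (sq_nonneg x), abs_of_pos h2]
      calc x ^ 2 * Real.exp (-(1/2) * x ^ 2)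
          ≤ 4 * Real.exp (x ^ 2 / 4) * Real.exp (-(1/2) * x ^ 2) := by nlinarith
        _ = 4 * Real.exp (-(1/4) * x ^ 2) := by
            rw [mul_assoc, ← Real.exp_add]; ring_nf
  have h2 := h.mul_const (Real.sqrt (2 * Real.pi))⁻¹
  refine h2.congr (Filter.Eventually.of_forall fun z => ?_)
  rw [gaussPDF_eq]; ring

lemma PhiBar_rep (x : ℝ) : PhiBar x = PhiBar 0 - ∫ t in (0:ℝ)..x, gaussPDF t := by
  have h1 : ∀ y : ℝ, PhiBar y = (∫ t, gaussPDF t) - ∫ t in Set.Iic y, gaussPDF t := by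
    intro y
    have h := intervalIntegral.integral_Iic_add_Ioi (b := y)
      integrable_gaussPDF.integrableOn integrable_gaussPDF.integrableOn
    rw [PhiBar, integral_Ici_eq_integral_Ioi]
    linarith
  rw [h1 x, h1 0, ← intervalIntegral.integral_Iic_sub_Iic
    integrable_gaussPDF.integrableOn integrable_gaussPDF.integrableOn]
  ring

lemma hasDerivAt_PhiBar (x : ℝ) : HasDerivAt PhiBar (-gaussPDF x) x := by
  have h : HasDerivAt (fun u => ∫ t in (0:ℝ)..u, gaussPDF t) (gaussPDF x) x :=
    intervalIntegral.integral_hasDerivAt_right integrable_gaussPDF.intervalIntegrable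
      continuous_gaussPDF.stronglyMeasurable.stronglyMeasurableAtFilter
      continuous_gaussPDF.continuousAt
  have h2 := (hasDerivAt_const x (PhiBar 0)).sub h
  rw [show PhiBar = fun u => PhiBar 0 - ∫ t in (0:ℝ)..u, gaussPDF t from funext PhiBar_rep]
  exact h2.congr_deriv (zero_sub _)

lemma tendsto_PhiBar_atTop : Tendsto PhiBar atTop (𝓝 0) := by
  have h := intervalIntegral_tendsto_integral_Ioi 0 integrable_gaussPDF.integrableOn
    (tendsto_id (α := ℝ))
  have h2 : Tendsto (fun x : ℝ => PhiBar 0 - ∫ t in (0:ℝ)..x, gaussPDF t) atTop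
      (𝓝 (PhiBar 0 - ∫ t in Set.Ioi (0:ℝ), gaussPDF t)) := (tendsto_const_nhds).sub h
  have h3 : PhiBar 0 - ∫ t in Set.Ioi (0:ℝ), gaussPDF t = 0 := by
    rw [PhiBar, integral_Ici_eq_integral_Ioi]; ring
  rw [h3] at h2
  rw [show PhiBar = fun u => PhiBar 0 - ∫ t in (0:ℝ)..u, gaussPDF t from funext PhiBar_rep]
  exact h2

lemma tendsto_PhiBar_atBot : Tendsto PhiBar atBot (𝓝 (∫ t, gaussPDF t)) := by
  have h := intervalIntegral_tendsto_integral_Iic 0 integrable_gaussPDF.integrableOn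
    (tendsto_id (α := ℝ))
  have h2 : Tendsto (fun x : ℝ => PhiBar 0 - ∫ t in (0:ℝ)..x, gaussPDF t) atBot
      (𝓝 (PhiBar 0 + ∫ t in Set.Iic (0:ℝ), gaussPDF t)) := by
    have := (tendsto_const_nhds (x := PhiBar 0) (f := atBot (α := ℝ))).add h
    refine this.congr fun x => ?_
    rw [intervalIntegral.integral_symm]; simp; ring
  have h3 : PhiBar 0 + ∫ t in Set.Iic (0:ℝ), gaussPDF t = ∫ t, gaussPDF t := by
    rw [PhiBar, integral_Ici_eq_integral_Ioi, add_comm]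
    exact intervalIntegral.integral_Iic_add_Ioi integrable_gaussPDF.integrableOn
      integrable_gaussPDF.integrableOn
  rw [h3] at h2
  rw [show PhiBar = fun u => PhiBar 0 - ∫ t in (0:ℝ)..u, gaussPDF t from funext PhiBar_rep]
  exact h2

lemma hasDerivAt_gaussPDF (x : ℝ) : HasDerivAt gaussPDF (-x * gaussPDF x) x := by
  have h : HasDerivAt (fun t : ℝ => -t ^ 2 / 2) (-x) x := by
    have := ((hasDerivAt_pow 2 x).neg.div_const 2)
    refine this.congr_deriv ?_
    norm_num; ring
  have h2 := h.exp.div_const (Real.sqrt (2 * Real.pi))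
  refine h2.congr_deriv ?_
  rw [gaussPDF]; ring

lemma tendsto_sq_atTop' : Tendsto (fun x : ℝ => x ^ 2) atTop atTop :=
  tendsto_pow_atTop (by norm_num)

lemma tendsto_gaussPDF_atTop : Tendsto gaussPDF atTop (𝓝 0) := by
  have h1 : Tendsto (fun x : ℝ => -x ^ 2 / 2) atTop atBot := by
    have h := tendsto_sq_atTop'.atTop_div_const (by norm_num : (0:ℝ) < 2)
    have := tendsto_neg_atTop_atBot.comp h
    refine this.congr fun x => ?_
    simp [Function.comp]; ring
  have h2 := (Real.tendsto_exp_atBot.comp h1).div_const (Real.sqrt (2 * Real.pi))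
  rw [zero_div] at h2
  exact h2.congr fun x => by simp only [Function.comp_apply, gaussPDF]

lemma tendsto_gaussPDF_atBot : Tendsto gaussPDF atBot (𝓝 0) := by
  have := tendsto_gaussPDF_atTop.comp tendsto_neg_atBot_atTop
  refine this.congr fun x => ?_
  simp [Function.comp, gaussPDF_neg]

lemma tendsto_mul_gaussPDF_atTop : Tendsto (fun z : ℝ => z * gaussPDF z) atTop (𝓝 0) := by
  have hg : Tendsto (fun u : ℝ => u ^ (1/2 : ℝ) * Real.exp (-(1/2) * u)) atTop (𝓝 0) :=
    tendsto_rpow_mul_exp_neg_mul_atTop_nhds_zero (1/2) (1/2) (by norm_num)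
  have hcomp := (hg.comp tendsto_sq_atTop').div_const (Real.sqrt (2 * Real.pi))
  rw [show (0:ℝ) / Real.sqrt (2 * Real.pi) = 0 by simp] at hcomp
  refine hcomp.congr' ?_
  filter_upwards [eventually_ge_atTop (0:ℝ)] with x hx
  simp only [Function.comp]
  rw [← Real.sqrt_eq_rpow, Real.sqrt_sq hx, gaussPDF,
    show -x ^ 2 / 2 = -(1/2) * x ^ 2 by ring]
  ring

lemma tendsto_mul_gaussPDF_atBot : Tendsto (fun z : ℝ => z * gaussPDF z) atBot (𝓝 0) := by
  have := (tendsto_mul_gaussPDF_atTop.comp tendsto_neg_atBot_atTop).neg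
  rw [neg_zero] at this
  refine this.congr fun x => ?_
  simp only [Function.comp]
  rw [gaussPDF_neg]; ring

lemma relu_of_nonneg {t : ℝ} (h : 0 ≤ t) : relu t = t := max_eq_left h

lemma relu_of_nonpos {t : ℝ} (h : t ≤ 0) : relu t = 0 := max_eq_right h

end Helpers

open scoped ENNReal NNReal

/-- E[Z·st(σZ + μ, α)] = σ·(Φ̄((α−μ)/σ) + Φ̄((α+μ)/σ)) for Z ~ N(0,1). -/
theorem gauss_z_st_mean (σ μ α : ℝ) (hσ : 0 < σ) :
    (∫ z, z * st (σ * z + μ) α ∂(gaussianReal 0 1)) =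
      σ * (PhiBar ((α - μ) / σ) + PhiBar ((α + μ) / σ)) := by
  set aR := (α - μ) / σ with haR_def
  set bR := (α + μ) / σ with hbR_def
  have haR : σ * aR = α - μ := by rw [haR_def]; field_simp
  have hbR : σ * bR = α + μ := by rw [hbR_def]; field_simp
  set g₁ : ℝ → ℝ := fun z => z * (σ * z + μ - α) * gaussPDF z with hg₁_def
  set g₂ : ℝ → ℝ := fun z => z * (-(σ * z + μ) - α) * gaussPDF z with hg₂_def
  -- measure conversion
  have hmeas : (gaussianReal 0 1 : Measure ℝ)
      = volume.withDensity (fun x => ((gaussPDF x).toNNReal : ℝ≥0∞)) := by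
    rw [gaussianReal_of_var_ne_zero 0 one_ne_zero]
    congr 1
    funext x
    rw [gaussianPDF]
    congr 1
    rw [gaussianPDFReal, gaussPDF]
    simp only [NNReal.coe_one, mul_one, sub_zero]
    rw [mul_comm, ← div_eq_mul_inv]
  rw [hmeas, integral_withDensity_eq_integral_smul
    continuous_gaussPDF.measurable.real_toNNReal]
  -- pointwise rewriting to indicators
  have hpt : ∀ z : ℝ, (gaussPDF z).toNNReal • (z * st (σ * z + μ) α)
      = Set.indicator (Set.Ici aR) g₁ z - Set.indicator (Set.Iic (-bR)) g₂ z := by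
    intro z
    rw [NNReal.smul_def, Real.coe_toNNReal _ (gaussPDF_nonneg z), st]
    have e1 : Set.indicator (Set.Ici aR) g₁ z
        = gaussPDF z * (z * relu (σ * z + μ - α)) := by
      by_cases h1 : aR ≤ z
      · rw [Set.indicator_of_mem (Set.mem_Ici.mpr h1), relu_of_nonneg
          (by nlinarith [mul_le_mul_of_nonneg_left h1 hσ.le]), hg₁_def]
        ring
      · rw [Set.indicator_of_notMem (fun hm => h1 (Set.mem_Ici.mp hm)), relu_of_nonpos
          (by push_neg at h1; nlinarith [mul_le_mul_of_nonneg_left h1.le hσ.le])]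
        ring
    have e2 : Set.indicator (Set.Iic (-bR)) g₂ z
        = gaussPDF z * (z * relu (-(σ * z + μ) - α)) := by
      by_cases h2 : z ≤ -bR
      · rw [Set.indicator_of_mem (Set.mem_Iic.mpr h2), relu_of_nonneg
          (by nlinarith [mul_le_mul_of_nonneg_left h2 hσ.le]), hg₂_def]
        ring
      · rw [Set.indicator_of_notMem (fun hm => h2 (Set.mem_Iic.mp hm)), relu_of_nonpos
          (by push_neg at h2; nlinarith [mul_le_mul_of_nonneg_left h2.le hσ.le])]
        ring
    rw [e1, e2, smul_eq_mul]
    ring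
  rw [show (fun z => (gaussPDF z).toNNReal • (z * st (σ * z + μ) α))
      = fun z => Set.indicator (Set.Ici aR) g₁ z - Set.indicator (Set.Iic (-bR)) g₂ z
    from funext hpt]
  -- integrability
  have hg₁int : Integrable g₁ := by
    have h := (integrable_sq_mul_gaussPDF.const_mul σ).add
      (integrable_mul_gaussPDF.const_mul (μ - α))
    refine h.congr (Filter.Eventually.of_forall fun z => ?_)
    simp only [Pi.add_apply]; rw [hg₁_def]; ring
  have hg₂int : Integrable g₂ := by
    have h := (integrable_sq_mul_gaussPDF.const_mul (-σ)).add
      (integrable_mul_gaussPDF.const_mul (-(μ + α)))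
    refine h.congr (Filter.Eventually.of_forall fun z => ?_)
    simp only [Pi.add_apply]; rw [hg₂_def]; ring
  rw [MeasureTheory.integral_sub
    (hg₁int.indicator measurableSet_Ici) (hg₂int.indicator measurableSet_Iic),
    MeasureTheory.integral_indicator measurableSet_Ici,
    MeasureTheory.integral_indicator measurableSet_Iic,
    MeasureTheory.integral_Ici_eq_integral_Ioi]
  -- FTC on (aR, ∞)
  have hG₁ : ∀ x : ℝ, HasDerivAt
      (fun z => -(σ * (z * gaussPDF z)) - σ * PhiBar z - (μ - α) * gaussPDF z) (g₁ x) x := by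
    intro x
    have h1 := (((hasDerivAt_id x).mul (hasDerivAt_gaussPDF x)).const_mul σ).neg
    have h2 := (hasDerivAt_PhiBar x).const_mul σ
    have h3 := (hasDerivAt_gaussPDF x).const_mul (μ - α)
    have h4 := (h1.sub h2).sub h3
    refine h4.congr_deriv ?_
    rw [hg₁_def]; simp; ring
  have ht1 : Filter.Tendsto
      (fun z => -(σ * (z * gaussPDF z)) - σ * PhiBar z - (μ - α) * gaussPDF z)
      Filter.atTop (nhds 0) := by
    have := ((tendsto_mul_gaussPDF_atTop.const_mul σ).neg.sub
      (tendsto_PhiBar_atTop.const_mul σ)).sub (tendsto_gaussPDF_atTop.const_mul (μ - α))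
    simpa using this
  have hI₁ : ∫ z in Set.Ioi aR, g₁ z
      = 0 - (-(σ * (aR * gaussPDF aR)) - σ * PhiBar aR - (μ - α) * gaussPDF aR) :=
    MeasureTheory.integral_Ioi_of_hasDerivAt_of_tendsto' (fun x _ => hG₁ x)
      hg₁int.integrableOn ht1
  -- FTC on (-∞, -bR]
  have hG₂ : ∀ x : ℝ, HasDerivAt
      (fun z => σ * (z * gaussPDF z) + σ * PhiBar z + (μ + α) * gaussPDF z) (g₂ x) x := by
    intro x
    have h1 := ((hasDerivAt_id x).mul (hasDerivAt_gaussPDF x)).const_mul σ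
    have h2 := (hasDerivAt_PhiBar x).const_mul σ
    have h3 := (hasDerivAt_gaussPDF x).const_mul (μ + α)
    have h4 := (h1.add h2).add h3
    refine h4.congr_deriv ?_
    rw [hg₂_def]; simp; ring
  have ht2 : Filter.Tendsto
      (fun z => σ * (z * gaussPDF z) + σ * PhiBar z + (μ + α) * gaussPDF z)
      Filter.atBot (nhds (σ * ∫ t, gaussPDF t)) := by
    have := ((tendsto_mul_gaussPDF_atBot.const_mul σ).add
      (tendsto_PhiBar_atBot.const_mul σ)).add (tendsto_gaussPDF_atBot.const_mul (μ + α))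
    simpa using this
  have hI₂ : ∫ z in Set.Iic (-bR), g₂ z
      = (σ * ((-bR) * gaussPDF (-bR)) + σ * PhiBar (-bR) + (μ + α) * gaussPDF (-bR))
        - σ * ∫ t, gaussPDF t :=
    MeasureTheory.integral_Iic_of_hasDerivAt_of_tendsto' (fun x _ => hG₂ x)
      hg₂int.integrableOn ht2
  rw [hI₁, hI₂]
  -- symmetry: PhiBar bR + PhiBar (-bR) = total mass
  have hsym : PhiBar bR + PhiBar (-bR) = ∫ t, gaussPDF t := by
    have h1 : ∫ t in Set.Iio (-bR), gaussPDF t = PhiBar bR := by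
      rw [← MeasureTheory.integral_Iic_eq_integral_Iio,
        ← integral_comp_neg_Ioi bR gaussPDF,
        PhiBar, MeasureTheory.integral_Ici_eq_integral_Ioi]
      exact MeasureTheory.setIntegral_congr_fun measurableSet_Ioi fun x _ => gaussPDF_neg x
    have h2 := intervalIntegral.integral_Iio_add_Ici (b := -bR)
      integrable_gaussPDF.integrableOn integrable_gaussPDF.integrableOn
    rw [h1] at h2
    rw [← h2, PhiBar]
    rfl
  linear_combination gaussPDF aR * haR + gaussPDF (-bR) * hbR - σ * hsym
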